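/- (Divisible case: circular LayerNorm expansion is lossless.) Let D_S ≥ 1 and D_T = k·D_S for an integer k ≥ 1, let μ, β ∈ ℝ^{D_S} and ε > 0. Then for every x ∈ ℝ^{D_S}, LN(V_circ(x); V_circ(μ), V_circ(β), ε) = V_circ(LN(x; μ, β, ε)). -/

import Mathlib

/-- Index bound for the tail part of an expansion from dimension `DS` to `DT`. -/
theorem sub_lt_mod (DS DT i : ℕ) (hDS : 0 < DS) (hi : i < DT) (h2 : DT / DS * DS ≤ i) :
    i - DT / DS * DS < DT % DS := by
  have h := Nat.div_add_mod' DT DS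
  set m := DT / DS * DS
  omega

/-- Average expansion `V_avg` from `ℝ^{DS}` to `ℝ^{DT}`. -/
noncomputable def vAvg (DS DT : ℕ) (hDS : 0 < DS) (x : Fin DS → ℝ) : Fin DT → ℝ :=
  fun i => if i.val < DT / DS * DS then x ⟨i.val % DS, Nat.mod_lt _ hDS⟩
           else (∑ j, x j) / (DS : ℝ)

/-- Zero expansion `V_zero` from `ℝ^{DS}` to `ℝ^{DT}`. -/
def vZero (DS DT : ℕ) (hDS : 0 < DS) (x : Fin DS → ℝ) : Fin DT → ℝ :=
  fun i => if i.val < DT / DS * DS then x ⟨i.val % DS, Nat.mod_lt _ hDS⟩ else 0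

/-- Circular expansion `V_circ` from `ℝ^{DS}` to `ℝ^{DT}`. -/
def vCirc (DS DT : ℕ) (hDS : 0 < DS) (x : Fin DS → ℝ) : Fin DT → ℝ :=
  fun i => x ⟨i.val % DS, Nat.mod_lt _ hDS⟩

/-- Mean of a vector. -/
noncomputable def meanV {D : ℕ} (x : Fin D → ℝ) : ℝ := (∑ i, x i) / (D : ℝ)

/-- Population variance of a vector. -/
noncomputable def varV {D : ℕ} (x : Fin D → ℝ) : ℝ := (∑ i, (x i - meanV x) ^ 2) / (D : ℝ)

/-- LayerNorm with scale `μ`, bias `β` and constant `ε`. -/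
noncomputable def layerNorm {D : ℕ} (x μ β : Fin D → ℝ) (ε : ℝ) : Fin D → ℝ :=
  fun i => μ i * (x i - meanV x) / Real.sqrt (varV x + ε) + β i

/-- divisible case: circular LayerNorm expansion is lossless:
for `D_T = k·D_S`, `LN(V_circ(x); V_circ(μ), V_circ(β), ε) = V_circ(LN(x; μ, β, ε))`. -/
lemma sum_vCirc (DS k : ℕ) (hDS : 0 < DS) (f : Fin DS → ℝ) :
    ∑ i : Fin (k * DS), f ⟨i.val % DS, Nat.mod_lt _ hDS⟩ = k * ∑ j, f j := by
  rw [← Fintype.sum_equiv (finProdFinEquiv (m := k) (n := DS))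
      (fun p : Fin k × Fin DS => f ⟨(finProdFinEquiv p).val % DS, Nat.mod_lt _ hDS⟩)
      (fun i => f ⟨i.val % DS, Nat.mod_lt _ hDS⟩) (fun p => rfl)]
  have : ∀ p : Fin k × Fin DS,
      f ⟨(finProdFinEquiv p).val % DS, Nat.mod_lt _ hDS⟩ = f p.2 := by
    intro p
    congr 1
    ext
    simp [finProdFinEquiv, Nat.add_mul_mod_self_left, Nat.mod_eq_of_lt p.2.2]
  rw [Fintype.sum_congr _ _ this, Fintype.sum_prod_type]
  simp [Finset.sum_const, mul_comm]

lemma mean_vCirc (DS k : ℕ) (hDS : 0 < DS) (hk : 1 ≤ k) (x : Fin DS → ℝ) :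
    meanV (vCirc DS (k * DS) hDS x) = meanV x := by
  unfold meanV vCirc
  rw [sum_vCirc DS k hDS]
  have hk' : (k : ℝ) ≠ 0 := Nat.cast_ne_zero.mpr (by omega)
  push_cast
  field_simp

theorem stmt_4' (DS k : ℕ) (hDS : 0 < DS) (hk : 1 ≤ k)
    (μ β : Fin DS → ℝ) (ε : ℝ) (hε : 0 < ε) (x : Fin DS → ℝ) :
    layerNorm (vCirc DS (k * DS) hDS x) (vCirc DS (k * DS) hDS μ)
        (vCirc DS (k * DS) hDS β) ε
      = vCirc DS (k * DS) hDS (layerNorm x μ β ε) := by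
  have hm := mean_vCirc DS k hDS hk x
  have hv : varV (vCirc DS (k * DS) hDS x) = varV x := by
    unfold varV
    rw [hm]
    have : ∑ i : Fin (k * DS), (vCirc DS (k * DS) hDS x i - meanV x) ^ 2
        = ∑ i : Fin (k * DS), (fun j : Fin DS => (x j - meanV x) ^ 2) ⟨i.val % DS, Nat.mod_lt _ hDS⟩ := rfl
    rw [this, sum_vCirc DS k hDS (fun j : Fin DS => (x j - meanV x) ^ 2)]
    have hk' : (k : ℝ) ≠ 0 := Nat.cast_ne_zero.mpr (by omega)
    have hDS' : (DS : ℝ) ≠ 0 := Nat.cast_ne_zero.mpr (by omega)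
    push_cast
    field_simp
  funext i
  simp only [layerNorm, vCirc, hm, hv]

theorem stmt_4 (DS k : ℕ) (hDS : 0 < DS) (hk : 1 ≤ k)
    (μ β : Fin DS → ℝ) (ε : ℝ) (hε : 0 < ε) (x : Fin DS → ℝ) :
    layerNorm (vCirc DS (k * DS) hDS x) (vCirc DS (k * DS) hDS μ)
        (vCirc DS (k * DS) hDS β) ε
      = vCirc DS (k * DS) hDS (layerNorm x μ β ε) := by
  exact stmt_4' DS k hDS hk μ β ε hε x
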